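/- Let Q = {(x, q(x)) : x ∈ ℤ_N} be the graph of a quadratic permutation polynomial q(x) = q₁x + q₂x² mod N, and let H be the group of translations of ℤ_N² that map Q onto itself. Then H has order gcd(2q₂, N), and the number of orbits of H acting on Q is N / gcd(2q₂, N). -/
import Mathlib

/-- Counting solutions of `a * x = 0` in `ZMod N`. -/
lemma qpp_aux_dvd (N : ℕ) (hN : 0 < N) (a : ℕ) (x : ZMod N) :
    (a : ZMod N) * x = 0 ↔ (N / Nat.gcd a N) ∣ x.val := by
  haveI : NeZero N := ⟨hN.ne'⟩
  set g := Nat.gcd a N with hg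
  have hgpos : 0 < g := Nat.gcd_pos_of_pos_right a hN
  have h1 : (a : ZMod N) * x = ((a * x.val : ℕ) : ZMod N) := by
    rw [Nat.cast_mul, ZMod.natCast_zmod_val]
  rw [h1, ZMod.natCast_eq_zero_iff]
  constructor
  · intro h
    have hNg : g * (N / g) = N := Nat.mul_div_cancel' (Nat.gcd_dvd_right a N)
    have hag : g * (a / g) = a := Nat.mul_div_cancel' (Nat.gcd_dvd_left a N)
    have h2 : g * (N / g) ∣ g * ((a / g) * x.val) := by
      rw [hNg, ← mul_assoc, hag]; exact h
    have h3 : (N / g) ∣ (a / g) * x.val := (mul_dvd_mul_iff_left hgpos.ne').mp h2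
    have hcop : Nat.Coprime (N / g) (a / g) :=
      Nat.Coprime.symm (Nat.coprime_div_gcd_div_gcd hgpos)
    exact hcop.dvd_of_dvd_mul_left h3
  · intro h
    have : g * (N / g) ∣ a * x.val :=
      mul_dvd_mul (Nat.gcd_dvd_left a N) h
    rwa [Nat.mul_div_cancel' (Nat.gcd_dvd_right a N)] at this

/-- For a QPP q(x) = q₁x + q₂x² over ℤ_N, the group H of translations
of ℤ_N² preserving the graph Q has order gcd(2q₂,N), and the number of H-orbits on Q
is N / gcd(2q₂,N). -/
theorem qpp_nonlinearity_degree (N : ℕ) (hN : 0 < N) (q₁ q₂ : ℕ)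
    (hperm : Function.Bijective
      (fun x : ZMod N => (q₁ : ZMod N) * x + (q₂ : ZMod N) * x ^ 2)) :
    let Q : Set (ZMod N × ZMod N) :=
      {p | p.2 = (q₁ : ZMod N) * p.1 + (q₂ : ZMod N) * p.1 ^ 2}
    let H : Set (ZMod N × ZMod N) :=
      {k | (fun p : ZMod N × ZMod N => p + k) '' Q = Q}
    Set.ncard H = Nat.gcd (2 * q₂) N ∧
    Set.ncard {O : Set (ZMod N × ZMod N) | ∃ p ∈ Q, O = {p' | ∃ k ∈ H, p' = p + k}} =
      N / Nat.gcd (2 * q₂) N := by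
  intro Q H
  haveI : NeZero N := ⟨hN.ne'⟩
  clear hperm
  set g := Nat.gcd (2 * q₂) N with hgdef
  have hgpos : 0 < g := Nat.gcd_pos_of_pos_right _ hN
  set m := N / g with hmdef
  have hmg : m * g = N := Nat.div_mul_cancel (Nat.gcd_dvd_right _ _)
  have hmpos : 0 < m :=
    Nat.div_pos (Nat.le_of_dvd hN (Nat.gcd_dvd_right _ _)) hgpos
  -- characterization of H
  have hH : ∀ k : ZMod N × ZMod N, k ∈ H ↔
      ((2 * q₂ : ℕ) : ZMod N) * k.1 = 0 ∧
        k.2 = (q₁ : ZMod N) * k.1 + (q₂ : ZMod N) * k.1 ^ 2 := by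
    intro k
    constructor
    · intro hk
      have hk' : (fun p : ZMod N × ZMod N => p + k) '' Q = Q := hk
      have hmem : ∀ x : ZMod N,
          ((q₁ : ZMod N) * x + (q₂ : ZMod N) * x ^ 2) + k.2 =
            (q₁ : ZMod N) * (x + k.1) + (q₂ : ZMod N) * (x + k.1) ^ 2 := by
        intro x
        have hx : (x, (q₁ : ZMod N) * x + (q₂ : ZMod N) * x ^ 2) ∈ Q := rfl
        have hmem' : (x, (q₁ : ZMod N) * x + (q₂ : ZMod N) * x ^ 2) + k ∈ Q := by
          rw [← hk']
          exact Set.mem_image_of_mem _ hx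
        exact hmem'
      have h0 := hmem 0
      have h1 := hmem 1
      constructor
      · push_cast
        linear_combination h0 - h1
      · push_cast at h0 ⊢
        linear_combination h0
    · rintro ⟨h1, h2⟩
      push_cast at h1
      apply Set.Subset.antisymm
      · rintro p ⟨p', hp', rfl⟩
        have hp'2 : p'.2 = (q₁ : ZMod N) * p'.1 + (q₂ : ZMod N) * p'.1 ^ 2 := hp'
        show p'.2 + k.2 = (q₁ : ZMod N) * (p'.1 + k.1) + (q₂ : ZMod N) * (p'.1 + k.1) ^ 2
        linear_combination hp'2 + h2 - p'.1 * h1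
      · intro p hp
        refine ⟨p - k, ?_, by simp⟩
        have hp2 : p.2 = (q₁ : ZMod N) * p.1 + (q₂ : ZMod N) * p.1 ^ 2 := hp
        show p.2 - k.2 = (q₁ : ZMod N) * (p.1 - k.1) + (q₂ : ZMod N) * (p.1 - k.1) ^ 2
        linear_combination hp2 - h2 + (p.1 - k.1) * h1
  -- group structure of H
  have hHzero : (0 : ZMod N × ZMod N) ∈ H := by
    rw [hH]; constructor <;> simp
  have hHadd : ∀ k k' : ZMod N × ZMod N, k ∈ H → k' ∈ H → k + k' ∈ H := by
    intro k k' hk hk'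
    rw [hH] at hk hk' ⊢
    obtain ⟨h1, h2⟩ := hk; obtain ⟨h1', h2'⟩ := hk'
    push_cast at h1 h1' ⊢
    constructor
    · show 2 * (q₂ : ZMod N) * (k.1 + k'.1) = 0
      linear_combination h1 + h1'
    · show k.2 + k'.2 =
        (q₁ : ZMod N) * (k.1 + k'.1) + (q₂ : ZMod N) * (k.1 + k'.1) ^ 2
      linear_combination h2 + h2' - k'.1 * h1
  have hHneg : ∀ k : ZMod N × ZMod N, k ∈ H → -k ∈ H := by
    intro k hk
    rw [hH] at hk ⊢
    obtain ⟨h1, h2⟩ := hk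
    push_cast at h1 ⊢
    constructor
    · show 2 * (q₂ : ZMod N) * (-k.1) = 0
      linear_combination -h1
    · show -k.2 = (q₁ : ZMod N) * (-k.1) + (q₂ : ZMod N) * (-k.1) ^ 2
      linear_combination -h2 - k.1 * h1
  -- cardinality of H
  have hltN : ∀ i : Fin g, m * (i : ℕ) < N := by
    intro i
    calc m * (i : ℕ) < m * g := by
          exact mul_lt_mul_of_pos_left i.2 hmpos
      _ = N := hmg
  have hcardH : Nat.card H = g := by
    have hf : ∀ i : Fin g, (((m * (i : ℕ) : ℕ) : ZMod N),
        (q₁ : ZMod N) * ((m * (i : ℕ) : ℕ) : ZMod N)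
          + (q₂ : ZMod N) * ((m * (i : ℕ) : ℕ) : ZMod N) ^ 2) ∈ H := by
      intro i
      rw [hH]
      refine ⟨?_, rfl⟩
      rw [qpp_aux_dvd N hN]
      rw [ZMod.val_cast_of_lt (hltN i)]
      exact ⟨(i : ℕ), rfl⟩
    let f : Fin g → H := fun i => ⟨_, hf i⟩
    have hbij : Function.Bijective f := by
      constructor
      · intro i j hij
        have h1 : ((m * (i : ℕ) : ℕ) : ZMod N) = ((m * (j : ℕ) : ℕ) : ZMod N) :=
          congrArg (fun p : ZMod N × ZMod N => p.1) (congrArg Subtype.val hij)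
        have h2 := congrArg ZMod.val h1
        rw [ZMod.val_cast_of_lt (hltN i), ZMod.val_cast_of_lt (hltN j)] at h2
        exact Fin.ext (Nat.eq_of_mul_eq_mul_left hmpos h2)
      · rintro ⟨k, hk⟩
        rw [hH] at hk
        obtain ⟨h1, h2⟩ := hk
        rw [qpp_aux_dvd N hN] at h1
        obtain ⟨i, hi⟩ := h1
        have hilt : i < g := by
          by_contra hle
          push_neg at hle
          have : N ≤ k.1.val := by
            calc N = m * g := hmg.symm
              _ ≤ m * i := Nat.mul_le_mul_left m hle
              _ = k.1.val := hi.symm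
          exact absurd (ZMod.val_lt k.1) (not_lt.mpr this)
        refine ⟨⟨i, hilt⟩, ?_⟩
        have hk1 : ((m * i : ℕ) : ZMod N) = k.1 := by
          rw [← hi, ZMod.natCast_zmod_val]
        apply Subtype.ext
        refine Prod.ext hk1 ?_
        show (q₁ : ZMod N) * ((m * i : ℕ) : ZMod N)
            + (q₂ : ZMod N) * ((m * i : ℕ) : ZMod N) ^ 2 = k.2
        rw [hk1, ← h2]
    exact (Nat.card_congr (Equiv.ofBijective f hbij)).symm.trans (by simp)
  have hcardH' : Set.ncard H = g := by
    rw [← Nat.card_coe_set_eq]; exact hcardH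
  refine ⟨hcardH', ?_⟩
  -- orbits
  have horb : ∀ p k : ZMod N × ZMod N, k ∈ H →
      {p' | ∃ k' ∈ H, p' = (p + k) + k'} = {p' | ∃ k' ∈ H, p' = p + k'} := by
    intro p k hk
    ext p'
    constructor
    · rintro ⟨k', hk', rfl⟩
      exact ⟨k + k', hHadd _ _ hk hk', by abel⟩
    · rintro ⟨k', hk', rfl⟩
      exact ⟨k' - k, by simpa [sub_eq_add_neg] using hHadd _ _ hk' (hHneg _ hk), by abel⟩
  have hq : ∀ j : ℕ, ((((j : ℕ) : ZMod N)),
      (q₁ : ZMod N) * ((j : ℕ) : ZMod N) + (q₂ : ZMod N) * ((j : ℕ) : ZMod N) ^ 2) ∈ Q :=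
    fun j => rfl
  have hmleN : m ≤ N := Nat.div_le_self N g
  have hmdvdN : m ∣ N := ⟨g, hmg.symm⟩
  have hcardS : Nat.card
      {O : Set (ZMod N × ZMod N) | ∃ p ∈ Q, O = {p' | ∃ k ∈ H, p' = p + k}} = m := by
    set S : Set (Set (ZMod N × ZMod N)) :=
      {O : Set (ZMod N × ZMod N) | ∃ p ∈ Q, O = {p' | ∃ k ∈ H, p' = p + k}} with hSdef
    have hFm : ∀ j : Fin m,
        {p' | ∃ k ∈ H, p' = ((((j : ℕ) : ZMod N)),
          (q₁ : ZMod N) * ((j : ℕ) : ZMod N) + (q₂ : ZMod N) * ((j : ℕ) : ZMod N) ^ 2) + k}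
          ∈ S :=
      fun j => ⟨_, hq (j : ℕ), rfl⟩
    let F : Fin m → S := fun j => ⟨_, hFm j⟩
    have hbij : Function.Bijective F := by
      constructor
      · intro i j hij
        have heq := congrArg Subtype.val hij
        simp only [F] at heq
        have hjmem : ((((j : ℕ) : ZMod N)),
            (q₁ : ZMod N) * ((j : ℕ) : ZMod N) + (q₂ : ZMod N) * ((j : ℕ) : ZMod N) ^ 2)
            ∈ {p' | ∃ k ∈ H, p' = ((((j : ℕ) : ZMod N)),
              (q₁ : ZMod N) * ((j : ℕ) : ZMod N)
                + (q₂ : ZMod N) * ((j : ℕ) : ZMod N) ^ 2) + k} :=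
          ⟨0, hHzero, by simp⟩
        rw [← heq] at hjmem
        obtain ⟨k, hk, hkk⟩ := hjmem
        have h1 : ((j : ℕ) : ZMod N) = ((i : ℕ) : ZMod N) + k.1 :=
          congrArg Prod.fst hkk
        rw [hH] at hk
        have hdvd : m ∣ k.1.val := (qpp_aux_dvd N hN _ _).mp hk.1
        have h2 : ((j : ℕ) : ZMod N) = (((i : ℕ) + k.1.val : ℕ) : ZMod N) := by
          rw [h1, Nat.cast_add, ZMod.natCast_zmod_val]
        have h3 : (j : ℕ) = ((i : ℕ) + k.1.val) % N := by
          have h4 := congrArg ZMod.val h2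
          rwa [ZMod.val_cast_of_lt (lt_of_lt_of_le j.2 hmleN), ZMod.val_natCast] at h4
        obtain ⟨c, hc⟩ := hdvd
        have h5 : (j : ℕ) % m = (i : ℕ) % m := by
          rw [h3, Nat.mod_mod_of_dvd _ hmdvdN, hc, Nat.add_mul_mod_self_left]
        rw [Nat.mod_eq_of_lt j.2, Nat.mod_eq_of_lt i.2] at h5
        exact Fin.ext h5.symm
      · rintro ⟨O, hO⟩
        obtain ⟨p, hp, rfl⟩ := hO
        have hp2 : p.2 = (q₁ : ZMod N) * p.1 + (q₂ : ZMod N) * p.1 ^ 2 := hp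
        set j : ℕ := p.1.val % m with hjdef
        have hjlt : j < m := Nat.mod_lt _ hmpos
        set c : ℕ := m * (p.1.val / m) with hcdef
        have hcj : c + j = p.1.val := Nat.div_add_mod p.1.val m
        have hcltN : c < N := lt_of_le_of_lt (hcj ▸ Nat.le_add_right c j) (ZMod.val_lt p.1)
        have hkH : ((c : ZMod N),
            (q₁ : ZMod N) * (c : ZMod N) + (q₂ : ZMod N) * (c : ZMod N) ^ 2) ∈ H := by
          rw [hH]
          refine ⟨?_, rfl⟩
          rw [qpp_aux_dvd N hN, ZMod.val_cast_of_lt hcltN]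
          exact ⟨_, rfl⟩
        have h1 : ((2 * q₂ : ℕ) : ZMod N) * (c : ZMod N) = 0 := ((hH _).mp hkH).1
        push_cast at h1
        have hx1 : ((j : ℕ) : ZMod N) + ((c : ℕ) : ZMod N) = p.1 := by
          rw [← Nat.cast_add, add_comm j c, hcj, ZMod.natCast_zmod_val]
        refine ⟨⟨j, hjlt⟩, ?_⟩
        apply Subtype.ext
        simp only [F]
        have hpeq : p = ((((j : ℕ) : ZMod N)),
            (q₁ : ZMod N) * ((j : ℕ) : ZMod N) + (q₂ : ZMod N) * ((j : ℕ) : ZMod N) ^ 2)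
            + ((c : ZMod N),
            (q₁ : ZMod N) * (c : ZMod N) + (q₂ : ZMod N) * (c : ZMod N) ^ 2) := by
          refine Prod.ext ?_ ?_
          · exact hx1.symm
          · show p.2 = (q₁ : ZMod N) * (j : ZMod N) + (q₂ : ZMod N) * (j : ZMod N) ^ 2
              + ((q₁ : ZMod N) * (c : ZMod N) + (q₂ : ZMod N) * (c : ZMod N) ^ 2)
            linear_combination hp2 + ((j : ZMod N)) * h1
              - ((q₁ : ZMod N) + (q₂ : ZMod N) * (p.1 + (j : ZMod N) + (c : ZMod N))) * hx1
        show {p' | ∃ k ∈ H, p' = ((((j : ℕ) : ZMod N)),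
              (q₁ : ZMod N) * ((j : ℕ) : ZMod N)
                + (q₂ : ZMod N) * ((j : ℕ) : ZMod N) ^ 2) + k}
            = {p' | ∃ k ∈ H, p' = p + k}
        conv_rhs => rw [hpeq]
        exact (horb _ _ hkH).symm
    exact (Nat.card_congr (Equiv.ofBijective F hbij)).symm.trans (by simp)
  rw [← Nat.card_coe_set_eq]
  exact hcardS
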